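/- Let n ≥ 1 and m ∈ ℂ. If f and g are continuous functions on ℝ^n ∖ {0} which are both m-homogeneous (i.e. f(tξ) = t^m f(ξ) and g(tξ) = t^m g(ξ) for all t > 0 and ξ ∈ ℝ^n ∖ {0}), and if f(ℓ) = g(ℓ) for every lattice point ℓ ∈ ℤ^n ∖ {0}, then f = g on all of ℝ^n ∖ {0}. In other words, a continuous homogeneous function on ℝ^n ∖ {0} is completely determined by its restriction to the lattice ℤ^n ∖ {0}. -/

import Mathlib

open scoped BigOperators

/-- The embedding of the lattice `ℤ^n` into `ℝ^n`. -/
def latt {n : ℕ} (ℓ : Fin n → ℤ) : Fin n → ℝ := fun i => (ℓ i : ℝ)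

/-- A continuous `m`-homogeneous function on `ℝ^n ∖ {0}` is determined by its values on the
lattice `ℤ^n ∖ {0}`. Here `t ^ m := exp (m log t)` for `t > 0` and `m ∈ ℂ`. -/
theorem determined_by_lattice (n : ℕ) (hn : 1 ≤ n) (m : ℂ)
    (f g : (Fin n → ℝ) → ℂ)
    (hfc : ContinuousOn f {x : Fin n → ℝ | x ≠ 0})
    (hgc : ContinuousOn g {x : Fin n → ℝ | x ≠ 0})
    (hfh : ∀ t : ℝ, 0 < t → ∀ ξ : Fin n → ℝ, ξ ≠ 0 → f (t • ξ) = (t : ℂ) ^ m * f ξ)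
    (hgh : ∀ t : ℝ, 0 < t → ∀ ξ : Fin n → ℝ, ξ ≠ 0 → g (t • ξ) = (t : ℂ) ^ m * g ξ)
    (hfg : ∀ ℓ : Fin n → ℤ, ℓ ≠ 0 → f (latt ℓ) = g (latt ℓ)) :
    ∀ ξ : Fin n → ℝ, ξ ≠ 0 → f ξ = g ξ := by
  intro ξ hξ
  obtain ⟨i0, hi0⟩ : ∃ i, ξ i ≠ 0 := by
    by_contra h
    push_neg at h
    exact hξ (funext h)
  -- lattice approximations
  set L : ℕ → Fin n → ℤ := fun k i => round ((k + 1 : ℝ) * ξ i) with hLdef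
  set x : ℕ → Fin n → ℝ := fun k => ((k + 1 : ℝ))⁻¹ • latt (L k) with hxdef
  have hkpos : ∀ k : ℕ, (0 : ℝ) < (k + 1 : ℝ) := by
    intro k; positivity
  -- eventually the key coordinate is nonzero
  have hLne : ∀ᶠ k in Filter.atTop, L k i0 ≠ 0 := by
    obtain ⟨K, hK⟩ := exists_nat_gt (1 / |ξ i0|)
    filter_upwards [Filter.eventually_ge_atTop K] with k hk
    have habs : (1 : ℝ) ≤ |(k + 1 : ℝ) * ξ i0| := by
      rw [abs_mul, abs_of_pos (hkpos k)]
      have h1 : 1 / |ξ i0| < (k + 1 : ℝ) := by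
        calc 1 / |ξ i0| < (K : ℝ) := hK
        _ ≤ (k : ℝ) := by exact_mod_cast hk
        _ ≤ (k : ℝ) + 1 := by linarith
      have h2 : (0:ℝ) < |ξ i0| := abs_pos.mpr hi0
      rw [div_lt_iff₀ h2] at h1
      linarith
    intro h0
    have hr := abs_sub_round ((k + 1 : ℝ) * ξ i0)
    rw [hLdef] at h0
    simp only at h0
    rw [h0] at hr
    simp at hr
    rw [abs_mul] at habs
    linarith
  have hxne : ∀ k : ℕ, L k i0 ≠ 0 → x k ≠ 0 := by
    intro k hk h0
    have : x k i0 = 0 := by rw [h0]; rfl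
    rw [hxdef] at this
    simp only [Pi.smul_apply, latt, smul_eq_mul] at this
    rcases mul_eq_zero.mp this with h | h
    · exact absurd h (inv_ne_zero (ne_of_gt (hkpos k)))
    · exact hk (by exact_mod_cast h)
  have hLlatt : ∀ k : ℕ, L k i0 ≠ 0 → latt (L k) ≠ 0 := by
    intro k hk h0
    have : latt (L k) i0 = 0 := by rw [h0]; rfl
    simp only [latt] at this
    exact hk (by exact_mod_cast this)
  -- x k → ξ
  have hxtendsto : Filter.Tendsto x Filter.atTop (nhds ξ) := by
    rw [tendsto_pi_nhds]
    intro i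
    rw [tendsto_iff_dist_tendsto_zero]
    apply squeeze_zero (f := fun k : ℕ => dist (x k i) (ξ i)) (g := fun k : ℕ => ((k:ℝ) + 1)⁻¹) (fun k => dist_nonneg)
    · intro k
      have : dist (x k i) (ξ i) = |((k+1:ℝ))⁻¹ * (L k i : ℝ) - ξ i| := by
        rw [hxdef]; simp [Real.dist_eq, latt]
      rw [this]
      have hk := hkpos k
      have heq : ((k+1:ℝ))⁻¹ * (L k i : ℝ) - ξ i
          = ((k+1:ℝ))⁻¹ * ((L k i : ℝ) - (k + 1 : ℝ) * ξ i) := by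
        field_simp
      rw [heq, abs_mul, abs_of_pos (inv_pos.mpr hk)]
      have hb : |(L k i : ℝ) - (k + 1 : ℝ) * ξ i| ≤ 1 := by
        rw [hLdef]
        have := abs_sub_round ((k + 1 : ℝ) * ξ i)
        rw [abs_sub_comm] at this
        linarith
      calc ((k+1:ℝ))⁻¹ * |(L k i : ℝ) - (k + 1 : ℝ) * ξ i|
          ≤ ((k+1:ℝ))⁻¹ * 1 := by
            exact mul_le_mul_of_nonneg_left hb (le_of_lt (inv_pos.mpr hk))
        _ = ((k+1:ℝ))⁻¹ := mul_one _
    · have := tendsto_one_div_add_atTop_nhds_zero_nat (𝕜 := ℝ)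
      simpa [one_div] using this
  -- x k is eventually in the set
  have hxmem : ∀ᶠ k in Filter.atTop, x k ∈ {x : Fin n → ℝ | x ≠ 0} := by
    filter_upwards [hLne] with k hk
    exact hxne k hk
  have hxnw : Filter.Tendsto x Filter.atTop (nhdsWithin ξ {x : Fin n → ℝ | x ≠ 0}) :=
    tendsto_nhdsWithin_iff.mpr ⟨hxtendsto, hxmem⟩
  have hfT : Filter.Tendsto (fun k => f (x k)) Filter.atTop (nhds (f ξ)) :=
    (hfc ξ hξ).tendsto.comp hxnw
  have hgT : Filter.Tendsto (fun k => g (x k)) Filter.atTop (nhds (g ξ)) :=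
    (hgc ξ hξ).tendsto.comp hxnw
  have heq : ∀ᶠ k in Filter.atTop, f (x k) = g (x k) := by
    filter_upwards [hLne] with k hk
    have hl : latt (L k) ≠ 0 := hLlatt k hk
    have hLz : L k ≠ 0 := fun h => hk (by rw [h]; rfl)
    have h1 := hfh ((k + 1 : ℝ))⁻¹ (inv_pos.mpr (hkpos k)) (latt (L k)) hl
    have h2 := hgh ((k + 1 : ℝ))⁻¹ (inv_pos.mpr (hkpos k)) (latt (L k)) hl
    rw [hxdef]
    simp only
    rw [h1, h2, hfg (L k) hLz]
  exact tendsto_nhds_unique (hfT.congr' heq) hgT
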